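/- For every modulus κ with 0 < κ < 1, the function dn₂ : ℝ → ℝ defined by dn₂ = cos ∘ ψ satisfies dn₂(0) = 1 and the differential equation (dn₂'(u))² = 2·(1 − dn₂(u))·(dn₂(u)² − λ²) for all real u, where λ = √(1 − κ²). -/

import Mathlib

open Real

/-- The Gauss hypergeometric series `F(a, b; c; x)` with real parameters. -/
noncomputable def hyperF (a b c x : ℝ) : ℝ :=
  ∑' n : ℕ, (Polynomial.eval a (ascPochhammer ℝ n) * Polynomial.eval b (ascPochhammer ℝ n) /
      (Polynomial.eval c (ascPochhammer ℝ n) * (Nat.factorial n : ℝ))) * x ^ n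

/-- `G κ T = ∫₀^T F(1/4, 3/4; 1/2; κ² sin² t) dt`. -/
noncomputable def G (κ T : ℝ) : ℝ :=
  ∫ t in (0:ℝ)..T, hyperF (1/4) (3/4) (1/2) (κ ^ 2 * Real.sin t ^ 2)

/-- The complete integral `K = G κ (π/2)`. -/
noncomputable def K (κ : ℝ) : ℝ := G κ (Real.pi / 2)

/-- The auxiliary function `ψ = arcsin (κ sin φ)`. -/
noncomputable def psi (κ : ℝ) (φ : ℝ → ℝ) (u : ℝ) : ℝ :=
  Real.arcsin (κ * Real.sin (φ u))

/-- The root function `rn = sin (ψ/2)`. -/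
noncomputable def rn (κ : ℝ) (φ : ℝ → ℝ) (u : ℝ) : ℝ :=
  Real.sin (psi κ φ u / 2)

noncomputable def bb (n : ℕ) : ℝ :=
  Polynomial.eval (1/2 : ℝ) (ascPochhammer ℝ n) / (Nat.factorial n : ℝ)

lemma bb_zero : bb 0 = 1 := by simp [bb]

lemma bb_succ (n : ℕ) : bb (n+1) = bb n * ((n + 1/2) / (n+1)) := by
  have h1 : (Nat.factorial n : ℝ) ≠ 0 := Nat.cast_ne_zero.2 n.factorial_ne_zero
  have h2 : ((n:ℝ) + 1) ≠ 0 := by positivity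
  simp only [bb, ascPochhammer_succ_eval, Nat.factorial_succ, Nat.cast_mul, Nat.cast_add,
    Nat.cast_one]
  field_simp
  ring

lemma bb_pos (n : ℕ) : 0 < bb n :=
  div_pos (ascPochhammer_pos n _ (by norm_num)) (by positivity)

lemma bb_le_one (n : ℕ) : bb n ≤ 1 := by
  induction n with
  | zero => simp [bb_zero]
  | succ n ih =>
    rw [bb_succ]
    have h : ((n:ℝ) + 1/2) / (n+1) ≤ 1 := by
      rw [div_le_one (by positivity)]; linarith
    calc bb n * ((n + 1/2) / (n+1)) ≤ 1 * 1 :=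
          mul_le_mul ih h (by positivity) zero_le_one
      _ = 1 := by norm_num

lemma summable_aux {x : ℝ} (hx : |x| < 1) (C : ℕ → ℝ) (hC : ∀ n, |C n| ≤ n + 1) :
    Summable (fun n => C n * x ^ n) := by
  have hs : Summable (fun n : ℕ => ((n:ℝ) + 1) * |x| ^ n) := by
    have h1 : Summable (fun n : ℕ => (n:ℝ) ^ 1 * |x| ^ n) :=
      summable_pow_mul_geometric_of_norm_lt_one 1 (by rwa [Real.norm_eq_abs, abs_abs])
    have h2 : Summable (fun n : ℕ => |x| ^ n) := summable_geometric_of_lt_one (abs_nonneg x) hx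
    simpa [add_mul, pow_one] using h1.add h2
  refine Summable.of_norm_bounded hs (fun n => ?_)
  rw [norm_mul, norm_pow, Real.norm_eq_abs, Real.norm_eq_abs]
  exact mul_le_mul (hC n) le_rfl (by positivity) (by positivity)

noncomputable def fB (x : ℝ) : ℝ := ∑' n : ℕ, bb n * x ^ n
noncomputable def dB (x : ℝ) : ℝ := ∑' n : ℕ, bb n * (n * x ^ (n - 1))

lemma abs_bb (n : ℕ) : |bb n| ≤ (n : ℝ) + 1 := by
  rw [abs_of_pos (bb_pos n)]
  have := bb_le_one n; have : (0:ℝ) ≤ n := Nat.cast_nonneg n; linarith [bb_le_one n]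

lemma summable_fB {x : ℝ} (hx : |x| < 1) : Summable (fun n => bb n * x ^ n) :=
  summable_aux hx _ abs_bb

lemma summable_dB' {x : ℝ} (hx : |x| < 1) :
    Summable (fun n : ℕ => bb (n+1) * (n+1) * x ^ n) := by
  refine summable_aux hx _ (fun n => ?_)
  rw [abs_mul, abs_of_pos (bb_pos (n+1)), abs_of_pos (by positivity : (0:ℝ) < (n:ℝ)+1)]
  calc bb (n+1) * ((n:ℝ)+1) ≤ 1 * ((n:ℝ)+1) :=
        mul_le_mul_of_nonneg_right (bb_le_one _) (by positivity)
    _ = (n:ℝ) + 1 := one_mul _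

lemma hasDerivAt_fB {x : ℝ} (hx : |x| < 1) : HasDerivAt fB (dB x) x := by
  set r : ℝ := (1 + |x|) / 2 with hr
  have hr0 : 0 < r := by positivity
  have hr1 : r < 1 := by rw [hr]; linarith
  have hxr : |x| < r := by rw [hr]; linarith
  have hu : Summable (fun n : ℕ => r⁻¹ * ((n:ℝ) ^ 1 * r ^ n)) :=
    (summable_pow_mul_geometric_of_norm_lt_one 1 (r := r)
      (by rwa [Real.norm_eq_abs, abs_of_pos hr0])).mul_left _
  refine hasDerivAt_tsum_of_isPreconnected hu (Metric.isOpen_ball)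
    (convex_ball (0:ℝ) r).isPreconnected
    (g := fun n y => bb n * y ^ n) (g' := fun n y => bb n * (n * y ^ (n-1)))
    (fun n y _ => (hasDerivAt_pow n y).const_mul (bb n))
    (fun n y hy => ?_) (Metric.mem_ball_self hr0) ?_ ?_
  · have hyr : |y| < r := by simpa [Real.dist_eq] using hy
    rw [Real.norm_eq_abs, abs_mul, abs_mul, abs_of_pos (bb_pos n), abs_of_nonneg
      (Nat.cast_nonneg n : (0:ℝ) ≤ n), abs_pow]
    rcases Nat.eq_zero_or_pos n with h0 | hn
    · subst h0; simp
    · have h1 : |y| ^ (n-1) ≤ r ^ (n-1) := pow_le_pow_left₀ (abs_nonneg y) hyr.le _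
      have h2 : bb n * ((n:ℝ) * |y| ^ (n-1)) ≤ 1 * ((n:ℝ) * r ^ (n-1)) := by
        apply mul_le_mul (bb_le_one n) _ (by positivity) zero_le_one
        exact mul_le_mul_of_nonneg_left h1 (Nat.cast_nonneg n)
      have h3 : (n:ℝ) * r ^ (n-1) = r⁻¹ * ((n:ℝ)^1 * r ^ n) := by
        obtain ⟨m, rfl⟩ := Nat.exists_eq_add_of_le hn
        field_simp
        rw [Nat.add_sub_cancel_left]
        ring
      rw [one_mul] at h2; rw [h3] at h2; exact h2
  · refine summable_of_ne_finset_zero (s := {0}) (fun n hn => ?_)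
    have : n ≠ 0 := by simpa using hn
    simp [zero_pow this]
  · exact Metric.mem_ball.2 (by simpa [Real.dist_eq] using hxr)

lemma fB_zero : fB 0 = 1 := by
  rw [fB, tsum_eq_single 0 (fun n hn => by simp [zero_pow hn])]
  simp [bb_zero]

lemma summable_nbb {x : ℝ} (hx : |x| < 1) : Summable (fun n : ℕ => bb n * n * x ^ n) := by
  refine summable_aux hx _ (fun n => ?_)
  rw [abs_mul, abs_of_pos (bb_pos n), abs_of_nonneg (Nat.cast_nonneg n : (0:ℝ) ≤ n)]
  have := bb_le_one n
  nlinarith [bb_pos n, (Nat.cast_nonneg n : (0:ℝ) ≤ n)]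


lemma bb_succ_mul (n : ℕ) : bb (n+1) * ((n:ℝ)+1) = bb n * ((n:ℝ) + 1/2) := by
  rw [bb_succ]
  field_simp

lemma dB_eq {x : ℝ} (hx : |x| < 1) : dB x = ∑' n : ℕ, bb (n+1) * ((n:ℝ)+1) * x ^ n := by
  have h1 : Summable (fun n : ℕ => bb (n+1) * ((n:ℝ)+1) * x ^ n) := summable_dB' hx
  have hsum : Summable (fun n : ℕ => bb n * ((n:ℝ) * x ^ (n-1))) := by
    rw [← summable_nat_add_iff 1]
    convert h1 using 2 with n
    · rfl
    · push_cast
      ring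
  rw [dB, hsum.tsum_eq_zero_add]
  simp only [Nat.cast_zero, zero_mul, mul_zero, zero_add]
  apply tsum_congr
  intro n
  push_cast
  ring_nf

lemma ode_fB {x : ℝ} (hx : |x| < 1) : (1 - x) * dB x = fB x / 2 := by
  have hD : Summable (fun n : ℕ => bb (n+1) * ((n:ℝ)+1) * x ^ n) := summable_dB' hx
  have hT : Summable (fun n : ℕ => bb n * (n:ℝ) * x ^ n) := summable_nbb hx
  have hF : Summable (fun n : ℕ => bb n * x ^ n) := summable_fB hx
  have hxD : x * dB x = ∑' n : ℕ, bb n * (n:ℝ) * x ^ n := by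
    rw [dB_eq hx, ← tsum_mul_left, hT.tsum_eq_zero_add]
    simp only [Nat.cast_zero, mul_zero, zero_mul, zero_add]
    apply tsum_congr
    intro n
    push_cast
    ring
  have expand : (1 - x) * dB x = dB x - x * dB x := by ring
  rw [expand, hxD, dB_eq hx, ← hD.tsum_sub hT]
  have : ∀ n : ℕ, bb (n+1) * ((n:ℝ)+1) * x ^ n - bb n * (n:ℝ) * x ^ n
      = (1/2) * (bb n * x ^ n) := by
    intro n
    rw [bb_succ_mul]
    ring
  rw [tsum_congr this, tsum_mul_left]
  rw [fB]
  ring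

lemma hasDerivAt_H {y : ℝ} (hy : |y| < 1) :
    HasDerivAt (fun z => fB z * Real.sqrt (1 - z)) 0 y := by
  have h1 : (0:ℝ) < 1 - y := by cases abs_lt.1 hy; linarith
  have hs : (0:ℝ) < Real.sqrt (1 - y) := Real.sqrt_pos.2 h1
  have hsq : Real.sqrt (1 - y) ^ 2 = 1 - y := Real.sq_sqrt h1.le
  have hsqrt : HasDerivAt (fun z : ℝ => Real.sqrt (1 - z))
      (-(1 / (2 * Real.sqrt (1 - y)))) y := by
    have h2 : HasDerivAt (fun z : ℝ => 1 - z) (-1) y := by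
      simpa using (hasDerivAt_id y).const_sub 1
    simpa [Function.comp_def] using (Real.hasDerivAt_sqrt h1.ne').comp y h2
  have := (hasDerivAt_fB hy).mul hsqrt
  refine HasDerivAt.congr_deriv this ?_
  have hode := ode_fB hy
  have hmul : Real.sqrt (1 - y) * Real.sqrt (1 - y) = 1 - y := by nlinarith [hsq]
  field_simp
  linear_combination 2 * dB y * hmul + 2 * hode

lemma fB_mul_sqrt {x : ℝ} (hx : |x| < 1) : fB x * Real.sqrt (1 - x) = 1 := by
  set H : ℝ → ℝ := fun z => fB z * Real.sqrt (1 - z) with hH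
  have key : H x = H 0 := by
    rcases eq_or_ne x 0 with rfl | hne
    · rfl
    · set a := min x 0
      set b := max x 0
      have hab : a < b := by
        rcases lt_or_gt_of_ne hne with h | h
        · simp only [a, b, min_eq_left h.le, max_eq_right h.le]; exact h
        · simp only [a, b, min_eq_right h.le, max_eq_left h.le]; exact h
      have hmem : ∀ y ∈ Set.Icc a b, |y| < 1 := by
        intro y hy
        rw [abs_lt] at hx ⊢
        constructor
        · have : a ≤ y := hy.1
          have : -1 < a := by simp only [a, lt_min_iff]; exact ⟨hx.1, by norm_num⟩
          linarith [hy.1]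
        · have : b < 1 := by simp only [b, max_lt_iff]; exact ⟨hx.2, by norm_num⟩
          linarith [hy.2]
      have hdiff : DifferentiableOn ℝ H (Set.Icc a b) := fun y hy =>
        (hasDerivAt_H (hmem y hy)).differentiableAt.differentiableWithinAt
      have hderiv : ∀ y ∈ Set.Ico a b, derivWithin H (Set.Icc a b) y = 0 := by
        intro y hy
        have hy' : y ∈ Set.Icc a b := ⟨hy.1, hy.2.le⟩
        rw [((hasDerivAt_H (hmem y hy')).hasDerivWithinAt).derivWithin
          ((uniqueDiffOn_Icc hab) y hy')]
      have h0 : (0:ℝ) ∈ Set.Icc a b := ⟨min_le_right x 0, le_max_right x 0⟩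
      have hxmem : x ∈ Set.Icc a b := ⟨min_le_left x 0, le_max_left x 0⟩
      have := constant_of_derivWithin_zero hdiff hderiv
      rw [this x hxmem, this 0 h0]
  simpa [hH, fB_zero] using key

lemma fB_val {x : ℝ} (hx : |x| < 1) : fB x = (Real.sqrt (1 - x))⁻¹ := by
  have h1 : (0:ℝ) < 1 - x := by cases abs_lt.1 hx; linarith
  have hs : Real.sqrt (1 - x) ≠ 0 := (Real.sqrt_pos.2 h1).ne'
  field_simp
  exact fB_mul_sqrt hx

noncomputable def cc (n : ℕ) : ℝ :=
  Polynomial.eval (1/4 : ℝ) (ascPochhammer ℝ n) * Polynomial.eval (3/4 : ℝ) (ascPochhammer ℝ n) /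
    (Polynomial.eval (1/2 : ℝ) (ascPochhammer ℝ n) * (Nat.factorial n : ℝ))

lemma cc_eq_bb (n : ℕ) : cc n = bb (2 * n) := by
  induction n with
  | zero => simp [cc, bb_zero]
  | succ n ih =>
    have hA : (0:ℝ) < Polynomial.eval (1/4 : ℝ) (ascPochhammer ℝ n) :=
      ascPochhammer_pos n _ (by norm_num)
    have hB : (0:ℝ) < Polynomial.eval (3/4 : ℝ) (ascPochhammer ℝ n) :=
      ascPochhammer_pos n _ (by norm_num)
    have hC : (0:ℝ) < Polynomial.eval (1/2 : ℝ) (ascPochhammer ℝ n) :=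
      ascPochhammer_pos n _ (by norm_num)
    have hfac : (0:ℝ) < (Nat.factorial n : ℝ) := by positivity
    have h2n : 2 * (n + 1) = (2 * n + 1) + 1 := by ring
    rw [h2n, bb_succ, bb_succ, ← ih]
    simp only [cc, ascPochhammer_succ_eval, Nat.factorial_succ]
    push_cast
    field_simp
    ring

lemma hyperF_eq_fB {s : ℝ} (hs : |s| < 1) :
    hyperF (1/4) (3/4) (1/2) (s^2) = (fB s + fB (-s)) / 2 := by
  have hns : |(-s)| < 1 := by rwa [abs_neg]
  have h1 : fB s + fB (-s) = ∑' n : ℕ, (bb n * s ^ n + bb n * (-s) ^ n) :=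
    ((summable_fB hs).tsum_add (summable_fB hns)).symm
  have h2 : ∑' n : ℕ, (bb n * s ^ n + bb n * (-s) ^ n)
      = ∑' k : ℕ, (bb (2*k) * s ^ (2*k) + bb (2*k) * (-s) ^ (2*k)) := by
    refine (Function.Injective.tsum_eq (g := fun k : ℕ => 2*k)
      (f := fun n => bb n * s ^ n + bb n * (-s) ^ n)
      (fun a b h => by simp only at h; omega) ?_).symm
    intro n hn
    simp only [Function.mem_support] at hn
    rcases Nat.even_or_odd n with he | ho
    · obtain ⟨m, rfl⟩ := he
      exact ⟨m, by show 2 * m = m + m; ring⟩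
    · exfalso
      apply hn
      rw [ho.neg_pow]
      ring
  have h3 : ∀ k : ℕ, bb (2*k) * s ^ (2*k) + bb (2*k) * (-s) ^ (2*k)
      = 2 * (bb (2*k) * (s^2) ^ k) := by
    intro k
    rw [(even_two_mul k).neg_pow, pow_mul]
    ring
  rw [h1, h2, tsum_congr h3, tsum_mul_left]
  have h4 : hyperF (1/4) (3/4) (1/2) (s^2) = ∑' k : ℕ, bb (2*k) * (s^2)^k := by
    refine tsum_congr (fun k => ?_)
    rw [show (Polynomial.eval (1/4 : ℝ) (ascPochhammer ℝ k) *
      Polynomial.eval (3/4 : ℝ) (ascPochhammer ℝ k) /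
      (Polynomial.eval (1/2 : ℝ) (ascPochhammer ℝ k) * (Nat.factorial k : ℝ))) = cc k from rfl,
      cc_eq_bb]
  rw [h4]
  ring

lemma eq_of_sq {a b : ℝ} (ha : 0 ≤ a) (hb : 0 ≤ b) (h : a^2 = b^2) : a = b := by
  rw [← Real.sqrt_sq ha, ← Real.sqrt_sq hb, h]

lemma hyperF_closed {s : ℝ} (hs : |s| < 1) :
    hyperF (1/4) (3/4) (1/2) (s^2) = Real.cos (Real.arcsin s / 2) / Real.sqrt (1 - s^2) := by
  obtain ⟨hs1, hs2⟩ := abs_lt.1 hs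
  have h1p : (0:ℝ) < 1 + s := by linarith
  have h1m : (0:ℝ) < 1 - s := by linarith
  have h1sq : (0:ℝ) < 1 - s^2 := by nlinarith
  set p := Real.sqrt (1 + s) with hp
  set q := Real.sqrt (1 - s) with hq
  have hp0 : 0 < p := Real.sqrt_pos.2 h1p
  have hq0 : 0 < q := Real.sqrt_pos.2 h1m
  have hp2 : p^2 = 1 + s := Real.sq_sqrt h1p.le
  have hq2 : q^2 = 1 - s := Real.sq_sqrt h1m.le
  have hpq : p * q = Real.sqrt (1 - s^2) := by
    rw [hp, hq, ← Real.sqrt_mul h1p.le]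
    congr 1
    ring
  have hpq0 : 0 < Real.sqrt (1 - s^2) := Real.sqrt_pos.2 h1sq
  have hcos : Real.cos (Real.arcsin s) = Real.sqrt (1 - s^2) := Real.cos_arcsin s
  have hhalf : Real.cos (Real.arcsin s / 2) = Real.sqrt ((1 + Real.sqrt (1 - s^2)) / 2) := by
    rw [Real.cos_half (by linarith [Real.neg_pi_div_two_le_arcsin s, Real.pi_pos])
      (by linarith [Real.arcsin_le_pi_div_two s, Real.pi_pos]), hcos]
  have key : p + q = 2 * Real.cos (Real.arcsin s / 2) := by
    refine eq_of_sq (by positivity) ?_ ?_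
    · rw [hhalf]; positivity
    · rw [hhalf]
      have : Real.sqrt ((1 + Real.sqrt (1 - s^2)) / 2) ^ 2 = (1 + Real.sqrt (1 - s^2)) / 2 :=
        Real.sq_sqrt (by positivity)
      rw [mul_pow, this]
      nlinarith [hp2, hq2, hpq]
  have hfb : fB s = q⁻¹ := fB_val hs
  have hfb2 : fB (-s) = p⁻¹ := by
    rw [fB_val (by rwa [abs_neg])]
    congr 1
    rw [hp]
    congr 1
    ring
  rw [hyperF_eq_fB hs, hfb, hfb2, ← hpq]
  rw [eq_div_iff (by positivity : p * q ≠ 0)]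
  field_simp
  nlinarith [key, hp0, hq0]

noncomputable def gI (κ t : ℝ) : ℝ :=
  Real.cos (Real.arcsin (κ * Real.sin t) / 2) / Real.sqrt (1 - (κ * Real.sin t)^2)

section calc1
variable {κ : ℝ} (hκ₀ : 0 < κ) (hκ₁ : κ < 1)
include hκ₀ hκ₁

lemma abs_ksin_lt (t : ℝ) : |κ * Real.sin t| < 1 := by
  rw [abs_mul]
  calc |κ| * |Real.sin t| ≤ |κ| * 1 :=
        mul_le_mul_of_nonneg_left (Real.abs_sin_le_one t) (abs_nonneg κ)
    _ = |κ| := mul_one _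
    _ < 1 := by rw [abs_of_pos hκ₀]; exact hκ₁

lemma one_sub_sq_pos (t : ℝ) : 0 < 1 - (κ * Real.sin t)^2 := by
  have h := abs_ksin_lt hκ₀ hκ₁ (κ := κ) t
  nlinarith [abs_nonneg (κ * Real.sin t), sq_abs (κ * Real.sin t), abs_lt.1 h]

lemma gI_pos (t : ℝ) : 0 < gI κ t := by
  apply div_pos
  · apply Real.cos_pos_of_mem_Ioo
    have h1 := Real.neg_pi_div_two_le_arcsin (κ * Real.sin t)
    have h2 := Real.arcsin_le_pi_div_two (κ * Real.sin t)
    have h3 := Real.pi_pos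
    constructor
    · show -(π/2) < _
      linarith
    · show _ < π/2
      linarith
  · exact Real.sqrt_pos.2 (one_sub_sq_pos hκ₀ hκ₁ t)

lemma continuous_gI : Continuous (gI κ) := by
  have hc1 : Continuous (fun t => κ * Real.sin t) := continuous_const.mul Real.continuous_sin
  apply Continuous.div
  · exact Real.continuous_cos.comp ((Real.continuous_arcsin.comp hc1).div_const 2)
  · exact Real.continuous_sqrt.comp (continuous_const.sub (hc1.pow 2))
  · intro t
    exact (Real.sqrt_pos.2 (one_sub_sq_pos hκ₀ hκ₁ t)).ne'

lemma G_eq : G κ = fun T => ∫ t in (0:ℝ)..T, gI κ t := by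
  funext T
  rw [G]
  apply intervalIntegral.integral_congr
  intro t _
  show hyperF (1/4) (3/4) (1/2) (κ ^ 2 * Real.sin t ^ 2) = gI κ t
  have h : κ ^ 2 * Real.sin t ^ 2 = (κ * Real.sin t) ^ 2 := by ring
  rw [h, hyperF_closed (abs_ksin_lt hκ₀ hκ₁ t)]
  rfl

lemma hasDerivAt_G (T : ℝ) : HasDerivAt (G κ) (gI κ T) T := by
  rw [G_eq hκ₀ hκ₁]
  exact ((continuous_gI hκ₀ hκ₁).integral_hasStrictDerivAt 0 T).hasDerivAt

end calc1

theorem stmt12 (κ : ℝ) (hκ₀ : 0 < κ) (hκ₁ : κ < 1)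
    (φ : ℝ → ℝ) (hφ₁ : Function.LeftInverse φ (G κ))
    (hφ₂ : Function.RightInverse φ (G κ)) :
    (Real.cos ∘ psi κ φ) 0 = 1 ∧
      ∀ u : ℝ, (deriv (Real.cos ∘ psi κ φ) u) ^ 2 =
        2 * (1 - (Real.cos ∘ psi κ φ) u) *
          (((Real.cos ∘ psi κ φ) u) ^ 2 - (Real.sqrt (1 - κ ^ 2)) ^ 2) := by
  have hmono : StrictMono (G κ) := strictMono_of_deriv_pos (fun x => by
    rw [(hasDerivAt_G hκ₀ hκ₁ x).deriv]; exact gI_pos hκ₀ hκ₁ x)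
  have hsurj : Function.Surjective (G κ) := hφ₂.surjective
  set e : ℝ ≃o ℝ := StrictMono.orderIsoOfSurjective (G κ) hmono hsurj with he
  have hφe : φ = ⇑e.symm := by
    funext y
    apply hmono.injective
    have h1 : G κ (φ y) = y := hφ₂ y
    have h2 : G κ (e.symm y) = y := by
      have : (e : ℝ → ℝ) = G κ := StrictMono.coe_orderIsoOfSurjective (G κ) hmono hsurj
      rw [← this]
      exact e.apply_symm_apply y
    rw [h1, h2]
  have hφc : Continuous φ := by rw [hφe]; exact e.symm.continuous
  have hDφ : ∀ u : ℝ, HasDerivAt φ (gI κ (φ u))⁻¹ u := fun u =>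
    HasDerivAt.of_local_left_inverse hφc.continuousAt (hasDerivAt_G hκ₀ hκ₁ (φ u))
      (gI_pos hκ₀ hκ₁ (φ u)).ne' (Filter.Eventually.of_forall hφ₂)
  constructor
  · have hG0 : G κ 0 = 0 := intervalIntegral.integral_same
    have hφ0 : φ 0 = 0 := by
      have := hφ₁ 0
      rwa [hG0] at this
    simp [Function.comp, psi, hφ0]
  · intro u
    set A : ℝ := κ * Real.sin (φ u) with hA
    set ψu : ℝ := Real.arcsin A with hψu
    have habs : |A| < 1 := abs_ksin_lt hκ₀ hκ₁ (φ u)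
    obtain ⟨hA1, hA2⟩ := abs_lt.1 habs
    have hsqpos : 0 < 1 - A^2 := one_sub_sq_pos hκ₀ hκ₁ (φ u)
    have hrt : 0 < Real.sqrt (1 - A^2) := Real.sqrt_pos.2 hsqpos
    have hrt2 : Real.sqrt (1 - A^2) ^ 2 = 1 - A^2 := Real.sq_sqrt hsqpos.le
    have hchalf : 0 < Real.cos (ψu / 2) := by
      apply Real.cos_pos_of_mem_Ioo
      have h1 := Real.neg_pi_div_two_le_arcsin A
      have h2 := Real.arcsin_le_pi_div_two A
      have h3 := Real.pi_pos
      constructor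
      · show -(π/2) < _; rw [hψu]; linarith
      · show _ < π/2; rw [hψu]; linarith
    -- chain rule
    have h2 : HasDerivAt (fun v => Real.sin (φ v)) (Real.cos (φ u) * (gI κ (φ u))⁻¹) u :=
      (Real.hasDerivAt_sin (φ u)).comp u (hDφ u)
    have h3 : HasDerivAt (fun v => κ * Real.sin (φ v))
        (κ * (Real.cos (φ u) * (gI κ (φ u))⁻¹)) u := h2.const_mul κ
    have h4 : HasDerivAt (psi κ φ)
        (1 / Real.sqrt (1 - A^2) * (κ * (Real.cos (φ u) * (gI κ (φ u))⁻¹))) u :=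
      (Real.hasDerivAt_arcsin hA1.ne' hA2.ne).comp u h3
    have h5 : HasDerivAt (Real.cos ∘ psi κ φ)
        (-Real.sin ψu * (1 / Real.sqrt (1 - A^2) * (κ * (Real.cos (φ u) * (gI κ (φ u))⁻¹)))) u :=
      (Real.hasDerivAt_cos ψu).comp u h4
    have hd : deriv (Real.cos ∘ psi κ φ) u = -2 * κ * Real.cos (φ u) * Real.sin (ψu / 2) := by
      rw [h5.deriv]
      have hgI : gI κ (φ u) = Real.cos (ψu / 2) / Real.sqrt (1 - A^2) := rfl
      have hsin2 : Real.sin ψu = 2 * Real.sin (ψu / 2) * Real.cos (ψu / 2) := by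
        rw [show ψu = 2 * (ψu / 2) by ring, Real.sin_two_mul]
        ring_nf
      rw [hgI, hsin2]
      field_simp
    rw [hd]
    have hcosψ : (Real.cos ∘ psi κ φ) u = Real.sqrt (1 - A^2) := Real.cos_arcsin A
    rw [hcosψ]
    have hsinsq : Real.sin (ψu / 2) ^ 2 = (1 - Real.sqrt (1 - A^2)) / 2 := by
      have hc2 : Real.sin (ψu / 2) ^ 2 = 1 / 2 - Real.cos ψu / 2 := by
        have h := Real.sin_sq_eq_half_sub (ψu / 2)
        rwa [show 2 * (ψu / 2) = ψu by ring] at h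
      have : Real.cos ψu = Real.sqrt (1 - A^2) := Real.cos_arcsin A
      linarith [hc2, this]
    have hκsq : Real.sqrt (1 - κ^2) ^ 2 = 1 - κ^2 := Real.sq_sqrt (by nlinarith)
    have hsc : Real.sin (φ u) ^ 2 + Real.cos (φ u) ^ 2 = 1 := Real.sin_sq_add_cos_sq (φ u)
    rw [hκsq, hrt2]
    have hAexp : A ^ 2 = κ^2 * Real.sin (φ u) ^ 2 := by rw [hA]; ring
    linear_combination (4 * κ^2 * Real.cos (φ u)^2) * hsinsq +
      (2 * (1 - Real.sqrt (1 - A^2))) * hAexp +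
      (2 * (1 - Real.sqrt (1 - A^2)) * κ^2) * hsc
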